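/- Let r > 0 and σ ∈ ℝ. Set λ₀ := −σ and, for n ∈ ℤ∖{0}, λ_n := sgn(n)√(σ² + 2|n| r²). Define g₀(y) := r^{−1/2} (0, 𝔥₀(r y)) and, for n ∈ ℤ∖{0}, α_n := (2r)^{−1/2} √(1 + σ/λ_n) and g_n(y) := α_n ( 𝔥_{|n|−1}(r y), (√(2|n|) r/(λ_n + σ)) 𝔥_{|n|}(r y) ). Then for every n ∈ ℤ and every y ∈ ℝ: (T_{r,σ} g_n)(y) = λ_n g_n(y); that is, each g_n is an eigenfunction of the operator T_{r,σ} with eigenvalue λ_n. -/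

import Mathlib

noncomputable section

/-- The k-th physicists' Hermite polynomial, `H_k(y) = (−1)^k e^{y²} (d/dy)^k e^{−y²}`. -/
def physHermite (k : ℕ) (y : ℝ) : ℝ :=
  (-1 : ℝ) ^ k * Real.exp (y ^ 2) * iteratedDeriv k (fun t => Real.exp (-t ^ 2)) y

/-- The k-th Hermite function `𝔥_k(y) = (2^k k! √π)^{−1/2} H_k(y) e^{−y²/2}`. -/
def hermiteFun (k : ℕ) (y : ℝ) : ℝ :=
  (Real.sqrt (2 ^ k * (Nat.factorial k : ℝ) * Real.sqrt Real.pi))⁻¹ *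
    physHermite k y * Real.exp (-(y ^ 2) / 2)

/-- The eigenvalues `λ_n`: `λ₀ = −σ`, `λ_n = sgn(n)√(σ² + 2|n|r²)` for `n ≠ 0`. -/
def lamE (r σ : ℝ) (n : ℤ) : ℝ :=
  if n = 0 then -σ else ((Int.sign n : ℤ) : ℝ) * Real.sqrt (σ ^ 2 + 2 * |(n : ℝ)| * r ^ 2)

/-- The normalization constants `α_n = (2r)^{−1/2}√(1 + σ/λ_n)` for `n ≠ 0`. -/
def alphaE (r σ : ℝ) (n : ℤ) : ℝ :=
  (Real.sqrt (2 * r))⁻¹ * Real.sqrt (1 + σ / lamE r σ n)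

/-- The eigenfunctions `g_n : ℝ → ℂ²`. -/
def gE (r σ : ℝ) (n : ℤ) (y : ℝ) : ℂ × ℂ :=
  if n = 0 then
    (0, (((Real.sqrt r)⁻¹ * hermiteFun 0 (r * y) : ℝ) : ℂ))
  else
    (((alphaE r σ n * hermiteFun (n.natAbs - 1) (r * y) : ℝ) : ℂ),
     ((alphaE r σ n * (Real.sqrt (2 * |(n : ℝ)|) * r / (lamE r σ n + σ)) *
        hermiteFun n.natAbs (r * y) : ℝ) : ℂ))

/-- The operator `T_{r,σ} = !![σ, y r² + i D_y; y r² − i D_y, −σ]` acting on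
differentiable `w : ℝ → ℂ²`. -/
def TOp (r σ : ℝ) (w : ℝ → ℂ × ℂ) (y : ℝ) : ℂ × ℂ :=
  ((σ : ℂ) * (w y).1 + ((y * r ^ 2 : ℝ) : ℂ) * (w y).2 + deriv (fun t => (w t).2) y,
   ((y * r ^ 2 : ℝ) : ℂ) * (w y).1 - deriv (fun t => (w t).1) y - (σ : ℂ) * (w y).2)

open Polynomial in
/-- physicists' Hermite polynomials, as polynomials -/
def QH : ℕ → Polynomial ℝ
  | 0 => 1
  | k + 1 => 2 * Polynomial.X * QH k - Polynomial.derivative (QH k)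

open Polynomial in
lemma QH_succ (k : ℕ) :
    QH (k + 1) = 2 * X * QH k - derivative (QH k) := rfl

open Polynomial in
lemma QH_zero : QH 0 = 1 := rfl

open Polynomial in
lemma derivative_QH : ∀ k, derivative (QH (k + 1)) = C (2 * (k + 1) : ℝ) * QH k := by
  intro k
  induction k with
  | zero =>
    rw [QH_succ]
    show derivative (2 * X * QH 0 - derivative (QH 0)) = C (2 * ((0:ℕ) + 1) : ℝ) * QH 0
    simp [QH, map_ofNat]
  | succ m ih =>
    rw [QH_succ, derivative_sub, derivative_mul, ih, QH_succ m]
    simp only [derivative_mul, derivative_C, derivative_X, derivative_add, derivative_one,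
      derivative_natCast, mul_one, zero_mul, add_zero, mul_zero, zero_add,
      Nat.cast_add, Nat.cast_one, C_add, C_mul, C_1, ← map_ofNat (C : ℝ →+* ℝ[X]) 2,
      C_eq_natCast]
    ring

open Polynomial in
lemma iteratedDeriv_gauss (k : ℕ) : ∀ y : ℝ,
    iteratedDeriv k (fun t => Real.exp (-t ^ 2)) y
      = (-1 : ℝ) ^ k * (QH k).eval y * Real.exp (-y ^ 2) := by
  induction k with
  | zero => intro y; simp [QH]
  | succ m ih =>
    intro y
    rw [iteratedDeriv_succ, funext ih]
    have hp := (QH m).hasDerivAt y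
    have he : HasDerivAt (fun y : ℝ => Real.exp (-y^2)) (Real.exp (-y^2) * (-(2*y))) y := by
      have := ((hasDerivAt_pow 2 y).neg).exp
      simpa using this
    have h1 := (hp.mul he).const_mul ((-1:ℝ)^m)
    rw [show (fun y : ℝ => (-1:ℝ)^m * eval y (QH m) * Real.exp (-y^2))
        = fun y : ℝ => (-1:ℝ)^m * (eval y (QH m) * Real.exp (-y^2)) from
        funext fun y => by ring]
    rw [HasDerivAt.deriv (f := fun y : ℝ => (-1:ℝ)^m * (eval y (QH m) * Real.exp (-y^2))) h1]
    have h2 : (QH (m+1)).eval y = 2 * y * (QH m).eval y - (QH m).derivative.eval y := by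
      rw [QH_succ]; simp
    rw [h2]
    ring

lemma physHermite_eq (k : ℕ) (y : ℝ) : physHermite k y = (QH k).eval y := by
  unfold physHermite
  rw [iteratedDeriv_gauss]
  rw [show (-1:ℝ)^k * Real.exp (y^2) * ((-1:ℝ)^k * (QH k).eval y * Real.exp (-y^2))
      = ((-1:ℝ)^k * (-1:ℝ)^k) * (Real.exp (y^2) * Real.exp (-y^2)) * (QH k).eval y by ring]
  rw [← Real.exp_add, ← pow_add]
  simp [Even.neg_one_pow ⟨k, rfl⟩]

def cH (k : ℕ) : ℝ := (Real.sqrt (2 ^ k * (Nat.factorial k : ℝ) * Real.sqrt Real.pi))⁻¹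

open Polynomial in
lemma hermiteFun_eq (k : ℕ) (y : ℝ) :
    hermiteFun k y = cH k * (QH k).eval y * Real.exp (-(y ^ 2) / 2) := by
  rw [hermiteFun, physHermite_eq]; rfl

open Polynomial in
lemma hermiteFun_hasDerivAt (k : ℕ) (y : ℝ) :
    HasDerivAt (hermiteFun k)
      (cH k * ((derivative (QH k)).eval y - y * (QH k).eval y) * Real.exp (-(y ^ 2) / 2)) y := by
  have hfun : hermiteFun k = fun y => cH k * ((QH k).eval y * Real.exp (-(y ^ 2) / 2)) := by
    funext y; rw [hermiteFun_eq]; ring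
  rw [hfun]
  have hp := (QH k).hasDerivAt y
  have he : HasDerivAt (fun y : ℝ => Real.exp (-(y ^ 2) / 2)) (Real.exp (-(y^2)/2) * (-y)) y := by
    have h0 : HasDerivAt (fun y : ℝ => -(y^2)/2) (-y) y := by
      have := ((hasDerivAt_pow 2 y).neg).div_const 2
      exact this.congr_deriv (by push_cast; ring)
    simpa using h0.exp
  have := (hp.mul he).const_mul (cH k)
  exact this.congr_deriv (by ring)

lemma cH_succ (k : ℕ) : cH k = Real.sqrt (2 * (k + 1)) * cH (k + 1) := by
  have h1 : (2:ℝ) ^ (k+1) * (Nat.factorial (k+1) : ℝ) * Real.sqrt Real.pi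
      = (2 * (k+1)) * (2 ^ k * (Nat.factorial k : ℝ) * Real.sqrt Real.pi) := by
    rw [Nat.factorial_succ]; push_cast; ring
  have hpos : (0:ℝ) < 2 * (k + 1) := by positivity
  rw [cH, cH, h1, Real.sqrt_mul hpos.le]
  rw [mul_inv, ← mul_assoc, mul_inv_cancel₀ (by positivity : Real.sqrt (2 * ((k:ℝ)+1)) ≠ 0), one_mul]

open Polynomial in
lemma creation (k : ℕ) (y : ℝ) :
    y * hermiteFun k y - deriv (hermiteFun k) y
      = Real.sqrt (2 * (k + 1)) * hermiteFun (k + 1) y := by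
  rw [(hermiteFun_hasDerivAt k y).deriv, hermiteFun_eq, hermiteFun_eq, cH_succ k, QH_succ]
  simp only [eval_sub, eval_mul, eval_ofNat, eval_X]
  ring

open Polynomial in
lemma annihilation (k : ℕ) (y : ℝ) :
    deriv (hermiteFun (k + 1)) y
      = Real.sqrt (2 * (k + 1)) * hermiteFun k y - y * hermiteFun (k + 1) y := by
  rw [(hermiteFun_hasDerivAt (k+1) y).deriv, derivative_QH, hermiteFun_eq, hermiteFun_eq,
    cH_succ k]
  have hs : Real.sqrt (2 * ((k:ℝ) + 1)) * Real.sqrt (2 * ((k:ℝ) + 1)) = 2 * ((k:ℝ) + 1) :=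
    Real.mul_self_sqrt (by positivity)
  simp only [eval_mul, eval_C]
  push_cast
  linear_combination (-(cH (k + 1) * eval y (QH k) * Real.exp (-(y ^ 2) / 2))) * hs

lemma deriv_h0 (y : ℝ) : deriv (hermiteFun 0) y = -y * hermiteFun 0 y := by
  rw [(hermiteFun_hasDerivAt 0 y).deriv, hermiteFun_eq, QH_zero]
  simp; ring

lemma hasDerivAt_scaled (k : ℕ) (c r y : ℝ) :
    HasDerivAt (fun t => c * hermiteFun k (r * t))
      (c * (deriv (hermiteFun k) (r * y) * r)) y := by
  have h1 : HasDerivAt (fun t : ℝ => r * t) r y := by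
    simpa using (hasDerivAt_id y).const_mul r
  have h2 := ((hermiteFun_hasDerivAt k (r * y)).comp y h1).const_mul c
  rw [(hermiteFun_hasDerivAt k (r * y)).deriv] at *
  simpa [Function.comp] using h2

lemma deriv_ofReal_scaled (k : ℕ) (c r y : ℝ) :
    deriv (fun t : ℝ => ((c * hermiteFun k (r * t) : ℝ) : ℂ)) y
      = ((c * (deriv (hermiteFun k) (r * y) * r) : ℝ) : ℂ) :=
  ((hasDerivAt_scaled k c r y).ofReal_comp).deriv

lemma abs_cast_int (n : ℤ) : |(n : ℝ)| = (n.natAbs : ℝ) := by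
  rw [Nat.cast_natAbs, Int.cast_abs]

lemma lam_sq (r σ : ℝ) (n : ℤ) (hn : n ≠ 0) :
    (lamE r σ n) ^ 2 = σ ^ 2 + 2 * (n.natAbs : ℝ) * r ^ 2 := by
  rw [lamE, if_neg hn, mul_pow]
  have h1 : (((Int.sign n : ℤ) : ℝ)) ^ 2 = 1 := by
    rcases lt_trichotomy n 0 with h | h | h
    · rw [Int.sign_eq_neg_one_of_neg h]; norm_num
    · exact absurd h hn
    · rw [Int.sign_eq_one_of_pos h]; norm_num
  rw [h1, one_mul, Real.sq_sqrt (by positivity), abs_cast_int]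

lemma lam_add_ne (r σ : ℝ) (hr : 0 < r) (n : ℤ) (hn : n ≠ 0) :
    lamE r σ n + σ ≠ 0 := by
  intro h
  have h2 := lam_sq r σ n hn
  have h3 : lamE r σ n = -σ := by linarith
  rw [h3] at h2
  have h4 : (1:ℝ) ≤ (n.natAbs : ℝ) := by
    have := Int.natAbs_pos.mpr hn
    exact_mod_cast this
  nlinarith [sq_nonneg σ, mul_pos hr hr]

/-- each `g_n` is an eigenfunction of `T_{r,σ}` with eigenvalue `λ_n`. -/
theorem stmt15 (r σ : ℝ) (hr : 0 < r) :
    ∀ (n : ℤ) (y : ℝ), TOp r σ (gE r σ n) y = ((lamE r σ n : ℝ) : ℂ) • gE r σ n y := by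
  intro n y
  by_cases hn : n = 0
  · subst hn
    have hg : gE r σ 0 = fun t => ((0 : ℂ),
        (((Real.sqrt r)⁻¹ * hermiteFun 0 (r * t) : ℝ) : ℂ)) := by
      funext t; simp [gE]
    rw [hg, TOp]
    simp only [deriv_const']
    rw [deriv_ofReal_scaled 0 ((Real.sqrt r)⁻¹) r y]
    have hlam : lamE r σ 0 = -σ := by simp [lamE]
    rw [hlam]
    rw [deriv_h0 (r * y)]
    refine Prod.ext ?_ ?_ <;> simp <;> push_cast <;> ring_nf
  · -- n ≠ 0
    obtain ⟨m, hm⟩ : ∃ m, n.natAbs = m + 1 :=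
      Nat.exists_eq_succ_of_ne_zero (Int.natAbs_ne_zero.mpr hn)
    set L := lamE r σ n with hLdef
    set α := alphaE r σ n with hadef
    set s := Real.sqrt (2 * ((m:ℝ) + 1)) with hsdef
    have habs : |(n : ℝ)| = (m : ℝ) + 1 := by
      rw [abs_cast_int, hm]; push_cast; ring
    set β := s * r / (L + σ) with hbdef
    have hg : gE r σ n = fun t => ((((α * hermiteFun m (r * t) : ℝ)) : ℂ),
        (((α * β * hermiteFun (m + 1) (r * t) : ℝ)) : ℂ)) := by
      funext t
      rw [gE, if_neg hn, hm]
      simp only [Nat.add_sub_cancel, habs, ← hLdef, ← hadef, ← hsdef, ← hbdef]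
    rw [hg, TOp]
    simp only
    rw [deriv_ofReal_scaled m α r y, deriv_ofReal_scaled (m+1) (α * β) r y]
    set A := hermiteFun m (r * y) with hAdef
    set B := hermiteFun (m + 1) (r * y) with hBdef
    have hs2 : s * s = 2 * ((m:ℝ) + 1) := Real.mul_self_sqrt (by positivity)
    have hL2 : L ^ 2 = σ ^ 2 + 2 * ((m:ℝ) + 1) * r ^ 2 := by
      rw [hLdef, lam_sq r σ n hn, hm]; push_cast; ring
    have hLσ : L + σ ≠ 0 := lam_add_ne r σ hr n hn
    have hdk : deriv (hermiteFun (m + 1)) (r * y) = s * A - r * y * B := by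
      rw [hsdef, hAdef, hBdef]; exact annihilation m (r * y)
    have hdm : deriv (hermiteFun m) (r * y) = r * y * A - s * B := by
      rw [hsdef, hAdef, hBdef]
      have h := creation m (r * y)
      linarith
    rw [hdk, hdm]
    have e1 : σ * (α * A) + y * r ^ 2 * (α * β * B)
        + α * β * ((s * A - r * y * B) * r) = L * (α * A) := by
      rw [hbdef]
      field_simp
      linear_combination (α * A * r ^ 2) * hs2 - (α * A) * hL2
    have e2 : y * r ^ 2 * (α * A) - α * ((r * y * A - s * B) * r)
        - σ * (α * β * B) = L * (α * β * B) := by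
      rw [hbdef]
      field_simp
      ring
    have e1' := congrArg (Complex.ofReal) e1
    have e2' := congrArg (Complex.ofReal) e2
    push_cast at e1' e2'
    rw [Prod.smul_mk, Prod.mk.injEq]
    constructor
    · push_cast
      rw [smul_eq_mul]
      linear_combination e1'
    · push_cast
      rw [smul_eq_mul]
      linear_combination e2'
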